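/- Let δ > 0, ε > 0, and let k'_v, k'_β, ω'_lv, ω'_lβ, ω'_hv, ω'_hβ, γ'_v, γ'_β, a_v, a_β all be strictly positive real numbers, let H be a 2×2 real symmetric positive definite matrix, and let B be an arbitrary 4×4 real matrix. Define the 4×4 matrix A = [[0, −(1/√ε)·diag(k'_v, k'_β)],[(1/2)·diag(ω'_lv·a_v, ω'_lβ·a_β)·H, −diag(ω'_lv, ω'_lβ)]] (2×2 blocks). Then the 8×8 matrix J = δ·[[A, 0],[B, −diag(ω'_hv, ω'_hβ, γ'_v, γ'_β)]] is Hurwitz. -/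

import Mathlib

/-- A square real matrix is Hurwitz if every root of its characteristic polynomial over `ℂ`
(i.e., every eigenvalue) has strictly negative real part. -/
def IsHurwitz {ι : Type} [Fintype ι] [DecidableEq ι] (M : Matrix ι ι ℝ) : Prop :=
  ∀ z ∈ (M.map (algebraMap ℝ ℂ)).charpoly.roots, z.re < 0

lemma quad_root_re_neg (P Q S : ℝ) (hP : 0 < P) (hQ : 0 < Q) (hS : 0 < S) (z : ℂ)
    (h : (P : ℂ) * z ^ 2 + (Q : ℂ) * z + (S : ℂ) = 0) : z.re < 0 := by
  by_contra hc
  push_neg at hc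
  obtain ⟨h1, h2⟩ := Complex.ext_iff.mp h
  simp only [Complex.add_re, Complex.add_im, Complex.mul_re, Complex.mul_im,
    Complex.ofReal_re, Complex.ofReal_im, Complex.zero_re, Complex.zero_im, pow_two] at h1 h2
  have hfac : z.im * (2 * P * z.re + Q) = 0 := by linear_combination h2
  rcases mul_eq_zero.mp hfac with hv | hv
  · rw [hv] at h1
    nlinarith [mul_nonneg hP.le (mul_nonneg hc hc), mul_nonneg hQ.le hc]
  · nlinarith [mul_nonneg hP.le hc]


lemma exists_eigenvector {n : Type*} [Fintype n] [DecidableEq n] (M : Matrix n n ℂ) (z : ℂ)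
    (hz : z ∈ M.charpoly.roots) : ∃ v, v ≠ 0 ∧ M.mulVec v = z • v := by
  have hz' : M.charpoly.IsRoot z :=
    (Polynomial.mem_roots (M.charpoly_monic.ne_zero)).mp hz
  have hdet : (Matrix.diagonal (fun _ : n => z) - M).det = 0 := by
    have h0 : (Polynomial.evalRingHom z) M.charpoly = 0 := hz'
    rw [Matrix.charpoly, RingHom.map_det] at h0
    convert h0 using 2
    ext i j
    by_cases hij : i = j <;>
      simp [hij, Matrix.charmatrix_apply, Matrix.diagonal_apply, Matrix.map_apply]
  obtain ⟨v, hv, hv0⟩ := (Matrix.exists_mulVec_eq_zero_iff).mpr hdet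
  refine ⟨v, hv, ?_⟩
  rw [Matrix.sub_mulVec] at hv0
  have hd : Matrix.mulVec (Matrix.diagonal fun _ : n => z) v = z • v := by
    funext i; simp [Matrix.mulVec_diagonal]
  rw [hd] at hv0
  funext i
  have h := congrFun hv0 i
  simp only [Pi.sub_apply, Pi.smul_apply, smul_eq_mul, Pi.zero_apply] at h ⊢
  linear_combination -h

set_option maxHeartbeats 2000000 in
lemma blockA_re_neg (K0 K1 m0 m1 w0 w1 H00 H01 H11 : ℝ)
    (hK0 : 0 < K0) (hK1 : 0 < K1) (hm0 : 0 < m0) (hm1 : 0 < m1)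
    (hw0 : 0 < w0) (hw1 : 0 < w1) (hH00 : 0 < H00)
    (hdet : 0 < H00 * H11 - H01 ^ 2)
    (z x0 x1 y0 y1 : ℂ) (hne : ¬(x0 = 0 ∧ x1 = 0 ∧ y0 = 0 ∧ y1 = 0))
    (e1 : z * x0 = -(K0 : ℂ) * y0) (e2 : z * x1 = -(K1 : ℂ) * y1)
    (e3 : z * y0 = (m0 : ℂ) * ((H00 : ℂ) * x0 + (H01 : ℂ) * x1) - (w0 : ℂ) * y0)
    (e4 : z * y1 = (m1 : ℂ) * ((H01 : ℂ) * x0 + (H11 : ℂ) * x1) - (w1 : ℂ) * y1) :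
    z.re < 0 := by
  have hx : ¬(x0 = 0 ∧ x1 = 0) := by
    rintro ⟨h0, h1⟩
    apply hne
    refine ⟨h0, h1, ?_, ?_⟩
    · have h2 : -(K0 : ℂ) * y0 = 0 := by rw [← e1, h0, mul_zero]
      have hK : (K0 : ℂ) ≠ 0 := by exact_mod_cast hK0.ne'
      simpa [hK] using h2
    · have h2 : -(K1 : ℂ) * y1 = 0 := by rw [← e2, h1, mul_zero]
      have hK : (K1 : ℂ) ≠ 0 := by exact_mod_cast hK1.ne'
      simpa [hK] using h2
  have hx' : x0 ≠ 0 ∨ x1 ≠ 0 := by tauto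
  have f0 : z ^ 2 * x0 + (w0 : ℂ) * (z * x0)
      + (K0 : ℂ) * (m0 : ℂ) * ((H00 : ℂ) * x0 + (H01 : ℂ) * x1) = 0 := by
    linear_combination z * e1 + (w0 : ℂ) * e1 - (K0 : ℂ) * e3
  have f1 : z ^ 2 * x1 + (w1 : ℂ) * (z * x1)
      + (K1 : ℂ) * (m1 : ℂ) * ((H01 : ℂ) * x0 + (H11 : ℂ) * x1) = 0 := by
    linear_combination z * e2 + (w1 : ℂ) * e2 - (K1 : ℂ) * e4
  have hn0c : ((x0.re * x0.re + x0.im * x0.im : ℝ) : ℂ) = x0 * (starRingEnd ℂ) x0 := by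
    rw [Complex.mul_conj, Complex.normSq_apply]
  have hn1c : ((x1.re * x1.re + x1.im * x1.im : ℝ) : ℂ) = x1 * (starRingEnd ℂ) x1 := by
    rw [Complex.mul_conj, Complex.normSq_apply]
  have hrc : ((x0.re * x1.re + x0.im * x1.im : ℝ) : ℂ) * 2
      = (starRingEnd ℂ) x0 * x1 + x0 * (starRingEnd ℂ) x1 := by
    apply Complex.ext <;> simp [Complex.mul_re, Complex.mul_im] <;> ring
  have hn0nn : (0:ℝ) ≤ x0.re * x0.re + x0.im * x0.im := by
    nlinarith [mul_self_nonneg x0.re, mul_self_nonneg x0.im]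
  have hn1nn : (0:ℝ) ≤ x1.re * x1.re + x1.im * x1.im := by
    nlinarith [mul_self_nonneg x1.re, mul_self_nonneg x1.im]
  have hr2 : (x0.re * x1.re + x0.im * x1.im) ^ 2
      ≤ (x0.re * x0.re + x0.im * x0.im) * (x1.re * x1.re + x1.im * x1.im) := by
    nlinarith [sq_nonneg (x0.re * x1.im - x0.im * x1.re)]
  have hpos : ∀ a : ℂ, a ≠ 0 → 0 < a.re * a.re + a.im * a.im := by
    intro a ha
    have h' : ¬(a.re = 0 ∧ a.im = 0) := by simpa [Complex.ext_iff] using ha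
    rcases not_and_or.mp h' with h' | h' <;>
      nlinarith [mul_self_nonneg a.re, mul_self_nonneg a.im, mul_self_pos.mpr h']
  have key : (((K1 * m1) * (x0.re * x0.re + x0.im * x0.im)
        + (K0 * m0) * (x1.re * x1.re + x1.im * x1.im) : ℝ) : ℂ) * z ^ 2
      + ((w0 * (K1 * m1) * (x0.re * x0.re + x0.im * x0.im)
        + w1 * (K0 * m0) * (x1.re * x1.re + x1.im * x1.im) : ℝ) : ℂ) * z
      + (((K0 * m0) * (K1 * m1) * (H00 * (x0.re * x0.re + x0.im * x0.im)
        + 2 * H01 * (x0.re * x1.re + x0.im * x1.im)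
        + H11 * (x1.re * x1.re + x1.im * x1.im)) : ℝ) : ℂ) = 0 := by
    push_cast at hn0c hn1c hrc ⊢
    linear_combination
      ((K1 : ℂ) * (m1 : ℂ) * z ^ 2 + (w0 : ℂ) * (K1 : ℂ) * (m1 : ℂ) * z
        + (K0 : ℂ) * (m0 : ℂ) * (K1 : ℂ) * (m1 : ℂ) * (H00 : ℂ)) * hn0c
      + ((K0 : ℂ) * (m0 : ℂ) * z ^ 2 + (w1 : ℂ) * (K0 : ℂ) * (m0 : ℂ) * z
        + (K0 : ℂ) * (m0 : ℂ) * (K1 : ℂ) * (m1 : ℂ) * (H11 : ℂ)) * hn1c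
      + ((K0 : ℂ) * (m0 : ℂ) * (K1 : ℂ) * (m1 : ℂ) * (H01 : ℂ)) * hrc
      + ((K1 : ℂ) * (m1 : ℂ)) * ((starRingEnd ℂ) x0) * f0
      + ((K0 : ℂ) * (m0 : ℂ)) * ((starRingEnd ℂ) x1) * f1
  have hc0 : (0:ℝ) < K0 * m0 := mul_pos hK0 hm0
  have hc1 : (0:ℝ) < K1 * m1 := mul_pos hK1 hm1
  have hP : (0:ℝ) < (K1 * m1) * (x0.re * x0.re + x0.im * x0.im)
      + (K0 * m0) * (x1.re * x1.re + x1.im * x1.im) := by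
    rcases hx' with h | h
    · nlinarith [mul_pos hc1 (hpos x0 h), mul_nonneg hc0.le hn1nn]
    · nlinarith [mul_pos hc0 (hpos x1 h), mul_nonneg hc1.le hn0nn]
  have hQ : (0:ℝ) < w0 * (K1 * m1) * (x0.re * x0.re + x0.im * x0.im)
      + w1 * (K0 * m0) * (x1.re * x1.re + x1.im * x1.im) := by
    rcases hx' with h | h
    · nlinarith [mul_pos (mul_pos hw0 hc1) (hpos x0 h),
        mul_nonneg (mul_nonneg hw1.le hc0.le) hn1nn]
    · nlinarith [mul_pos (mul_pos hw1 hc0) (hpos x1 h),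
        mul_nonneg (mul_nonneg hw0.le hc1.le) hn0nn]
  have hT : (0:ℝ) < H00 * (x0.re * x0.re + x0.im * x0.im)
      + 2 * H01 * (x0.re * x1.re + x0.im * x1.im)
      + H11 * (x1.re * x1.re + x1.im * x1.im) := by
    rcases eq_or_lt_of_le hn1nn with h1 | h1
    · have hx1re : x1.re = 0 := by nlinarith [mul_self_nonneg x1.re, mul_self_nonneg x1.im]
      have hx1im : x1.im = 0 := by nlinarith [mul_self_nonneg x1.re, mul_self_nonneg x1.im]
      have hx0 : x0 ≠ 0 := by
        rcases hx' with h | h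
        · exact h
        · exact absurd (Complex.ext hx1re hx1im) h
      simp only [hx1re, hx1im, mul_zero, zero_mul, add_zero]
      nlinarith [mul_pos hH00 (hpos x0 hx0)]
    · nlinarith [sq_nonneg (H00 * (x0.re * x1.re + x0.im * x1.im)
          + H01 * (x1.re * x1.re + x1.im * x1.im)),
        mul_pos hdet h1,
        mul_nonneg (sq_nonneg H00) (sub_nonneg.2 hr2),
        mul_pos hH00 h1, mul_nonneg hn0nn hn1nn]
  exact quad_root_re_neg _ _ _ hP hQ (mul_pos (mul_pos hc0 hc1) hT) z key

set_option maxHeartbeats 2000000 in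
theorem averaged_jacobian_hurwitz
    (δ ε kv kβ ωlv ωlβ ωhv ωhβ γv γβ av aβ : ℝ)
    (hδ : 0 < δ) (hε : 0 < ε) (hkv : 0 < kv) (hkβ : 0 < kβ)
    (hωlv : 0 < ωlv) (hωlβ : 0 < ωlβ) (hωhv : 0 < ωhv) (hωhβ : 0 < ωhβ)
    (hγv : 0 < γv) (hγβ : 0 < γβ) (hav : 0 < av) (haβ : 0 < aβ)
    (H : Matrix (Fin 2) (Fin 2) ℝ) (hH : H.PosDef)
    (B : Matrix (Fin 4) (Fin 2 ⊕ Fin 2) ℝ)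
    (A : Matrix (Fin 2 ⊕ Fin 2) (Fin 2 ⊕ Fin 2) ℝ)
    (hA : A = Matrix.fromBlocks 0 (-((1 / Real.sqrt ε) • Matrix.diagonal ![kv, kβ]))
        ((1 / 2 : ℝ) • (Matrix.diagonal ![ωlv * av, ωlβ * aβ] * H))
        (-(Matrix.diagonal ![ωlv, ωlβ]))) :
    IsHurwitz (δ • Matrix.fromBlocks A 0 B (-(Matrix.diagonal ![ωhv, ωhβ, γv, γβ]))) := by
  intro z hz
  obtain ⟨v, hv, hMv⟩ := exists_eigenvector _ z hz
  have hsq : 0 < Real.sqrt ε := Real.sqrt_pos.mpr hε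
  by_cases hp : v (Sum.inl (Sum.inl 0)) = 0 ∧ v (Sum.inl (Sum.inl 1)) = 0 ∧
      v (Sum.inl (Sum.inr 0)) = 0 ∧ v (Sum.inl (Sum.inr 1)) = 0
  · -- the top block of the eigenvector vanishes; eigenvalue of the diagonal block
    obtain ⟨hp1, hp2, hp3, hp4⟩ := hp
    have final : ∀ (g : ℝ) (q : ℂ), 0 < g → q ≠ 0 → -(↑δ * ↑g * q) = z * q → z.re < 0 := by
      intro g q hg hq hE
      have hzval : z = ((-(δ * g) : ℝ) : ℂ) := by
        have h2 : (z + ((δ * g : ℝ) : ℂ)) * q = 0 := by push_cast; linear_combination -hE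
        rcases mul_eq_zero.mp h2 with h | h
        · push_cast at h ⊢; linear_combination h
        · exact absurd h hq
      rw [hzval, Complex.ofReal_re]
      nlinarith [mul_pos hδ hg]
    obtain ⟨i, hi⟩ := Function.ne_iff.mp hv
    rcases i with (i | i) | i
    · fin_cases i
      · exact absurd hp1 hi
      · exact absurd hp2 hi
    · fin_cases i
      · exact absurd hp3 hi
      · exact absurd hp4 hi
    · have E5 := congrFun hMv (Sum.inr 0)
      have E6 := congrFun hMv (Sum.inr 1)
      have E7 := congrFun hMv (Sum.inr 2)
      have E8 := congrFun hMv (Sum.inr 3)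
      simp [hA, Matrix.mulVec, dotProduct, Fintype.sum_sum_type, Fin.sum_univ_two,
        Fin.sum_univ_four, hp1, hp2, hp3, hp4] at E5 E6 E7 E8
      fin_cases i
      · exact final ωhv _ hωhv hi E5
      · exact final ωhβ _ hωhβ hi E6
      · exact final γv _ hγv hi E7
      · exact final γβ _ hγβ hi E8
  · -- eigenvalue of the A block
    have E1 := congrFun hMv (Sum.inl (Sum.inl 0))
    have E2 := congrFun hMv (Sum.inl (Sum.inl 1))
    have E3 := congrFun hMv (Sum.inl (Sum.inr 0))
    have E4 := congrFun hMv (Sum.inl (Sum.inr 1))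
    simp [hA, Matrix.mulVec, dotProduct, Fintype.sum_sum_type, Fin.sum_univ_two,
      Fin.sum_univ_four] at E1 E2 E3 E4
    have hsym : H 1 0 = H 0 1 := by
      have := hH.1.apply 0 1
      simpa using this
    have hH00 : 0 < H 0 0 := by
      have h10 : (![1, 0] : Fin 2 → ℝ) ≠ 0 := by
        intro h; have := congrFun h 0; simp at this
      have := hH.dotProduct_mulVec_pos h10
      simpa [Matrix.mulVec, dotProduct, Fin.sum_univ_two] using this
    have hdet2 : 0 < H 0 0 * H 1 1 - H 0 1 ^ 2 := by
      have hd := hH.det_pos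
      rw [Matrix.det_fin_two, hsym] at hd
      nlinarith [hd]
    rw [hsym] at E4
    refine blockA_re_neg (δ * (kv / Real.sqrt ε)) (δ * (kβ / Real.sqrt ε))
      (δ * (ωlv * av / 2)) (δ * (ωlβ * aβ / 2)) (δ * ωlv) (δ * ωlβ)
      (H 0 0) (H 0 1) (H 1 1) (by positivity) (by positivity) (by positivity) (by positivity)
      (by positivity) (by positivity) hH00 hdet2 z _ _ _ _ hp ?_ ?_ ?_ ?_
    · push_cast; linear_combination -E1
    · push_cast; linear_combination -E2
    · push_cast; linear_combination -E3
    · push_cast; linear_combination -E4
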